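/- There is no graph Γ ∈ 𝒢₃(θ0,θ1,θ2) with exactly three distinct vertex degrees whose vertex set admits a partition into nonempty sets V1, V2, V3 with |V1| ≥ 2 such that: the induced subgraph on V1 is complete or edgeless; either every vertex of V1 is adjacent to every vertex of V2 or no vertex of V1 is adjacent to any vertex of V2; and either every vertex of V1 is adjacent to every vertex of V3 or no vertex of V1 is adjacent to any vertex of V3. -/

import Mathlib

open Matrix SimpleGraph Finset

namespace Stm14

variable {V : Type} [Fintype V] [DecidableEq V]

section Herm

variable {A : Matrix V V ℝ} (hA : A.IsHermitian)

noncomputable def Umat : Matrix V V ℝ := (hA.eigenvectorUnitary : Matrix V V ℝ)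

noncomputable def ycoord (x : V → ℝ) : V → ℝ := (star (Umat hA)) *ᵥ x

lemma UstarU : (star (Umat hA)) * Umat hA = 1 := Unitary.coe_star_mul_self _
lemma UUstar : Umat hA * (star (Umat hA)) = 1 := Unitary.coe_mul_star_self _

lemma dot_U (x w : V → ℝ) : x ⬝ᵥ ((Umat hA) *ᵥ w) = (ycoord hA x) ⬝ᵥ w := by
  rw [dotProduct_mulVec]
  congr 1
  ext j
  simp [ycoord, Matrix.vecMul, Matrix.mulVec, dotProduct, Matrix.star_apply, mul_comm]

lemma quad_eq (x : V → ℝ) :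
    x ⬝ᵥ A *ᵥ x = ∑ i, hA.eigenvalues i * (ycoord hA x i)^2 := by
  conv_lhs => rw [hA.spectral_theorem, Unitary.conjStarAlgAut_apply]
  rw [show ((hA.eigenvectorUnitary : Matrix V V ℝ) * diagonal (RCLike.ofReal ∘ hA.eigenvalues)
      * (star (hA.eigenvectorUnitary : Matrix V V ℝ))) = Umat hA * (diagonal (RCLike.ofReal ∘ hA.eigenvalues)
      * (star (Umat hA))) by rw [Umat, mul_assoc]]
  rw [← Matrix.mulVec_mulVec, dot_U]
  rw [← Matrix.mulVec_mulVec]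
  simp only [ycoord]
  simp [Matrix.mulVec_diagonal, dotProduct, sq]
  exact Finset.sum_congr rfl (fun i _ => by ring)

lemma parseval (x : V → ℝ) : x ⬝ᵥ x = ∑ i, (ycoord hA x i)^2 := by
  have h : x ⬝ᵥ x = x ⬝ᵥ ((Umat hA * star (Umat hA)) *ᵥ x) := by rw [UUstar, one_mulVec]
  rw [h, ← Matrix.mulVec_mulVec, dot_U]
  simp [dotProduct, ycoord, sq]

lemma x_recover (x : V → ℝ) : Umat hA *ᵥ (ycoord hA x) = x := by
  rw [ycoord, Matrix.mulVec_mulVec, UUstar, one_mulVec]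

lemma mulVec_eq (x : V → ℝ) :
    A *ᵥ x = Umat hA *ᵥ (fun i => hA.eigenvalues i * ycoord hA x i) := by
  have hAU : A * Umat hA = Umat hA * diagonal (RCLike.ofReal ∘ hA.eigenvalues) := by
    have h2 := congrArg (fun M => M * (Umat hA)) hA.spectral_theorem
    simp only [Unitary.conjStarAlgAut_apply] at h2
    rw [h2, Umat, mul_assoc, mul_assoc, Unitary.coe_star_mul_self, mul_one]
  conv_lhs => rw [← x_recover hA x]
  rw [Matrix.mulVec_mulVec, hAU]
  ext i
  simp [Matrix.mulVec, dotProduct, Matrix.mul_diagonal, mul_assoc, Function.comp]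

lemma quad_le {μ : ℝ} (hub : ∀ i, hA.eigenvalues i ≤ μ) (x : V → ℝ) :
    x ⬝ᵥ A *ᵥ x ≤ μ * (x ⬝ᵥ x) := by
  rw [quad_eq hA x, parseval hA x, Finset.mul_sum]
  exact Finset.sum_le_sum fun i _ => mul_le_mul_of_nonneg_right (hub i) (sq_nonneg _)

lemma quad_ge {μ : ℝ} (hlb : ∀ i, μ ≤ hA.eigenvalues i) (x : V → ℝ) :
    μ * (x ⬝ᵥ x) ≤ x ⬝ᵥ A *ᵥ x := by
  rw [quad_eq hA x, parseval hA x, Finset.mul_sum]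
  exact Finset.sum_le_sum fun i _ => mul_le_mul_of_nonneg_right (hlb i) (sq_nonneg _)

lemma eigen_of_rayleigh {μ : ℝ} (hub : ∀ i, hA.eigenvalues i ≤ μ) (x : V → ℝ)
    (hx : μ * (x ⬝ᵥ x) ≤ x ⬝ᵥ A *ᵥ x) : A *ᵥ x = μ • x := by
  have key : ∀ i ∈ Finset.univ, (μ - hA.eigenvalues i) * (ycoord hA x i)^2 = 0 := by
    rw [← Finset.sum_eq_zero_iff_of_nonneg
      (fun i _ => mul_nonneg (by linarith [hub i]) (sq_nonneg _))]
    have h1 : ∑ i, (μ - hA.eigenvalues i) * (ycoord hA x i)^2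
        = μ * (x ⬝ᵥ x) - x ⬝ᵥ A *ᵥ x := by
      rw [quad_eq hA x, parseval hA x, Finset.mul_sum, ← Finset.sum_sub_distrib]
      exact Finset.sum_congr rfl (fun i _ => by ring)
    have h2 := quad_le hA hub x
    linarith
  have h3 : (fun i => hA.eigenvalues i * ycoord hA x i) = fun i => μ * ycoord hA x i := by
    funext i
    rcases mul_eq_zero.mp (key i (Finset.mem_univ i)) with h | h
    · rw [show hA.eigenvalues i = μ by linarith [sub_eq_zero.mp h]]
    · rw [pow_eq_zero_iff (by norm_num)] at h
      rw [h, mul_zero, mul_zero]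
  calc A *ᵥ x = Umat hA *ᵥ (fun i => hA.eigenvalues i * ycoord hA x i) := mulVec_eq hA x
    _ = Umat hA *ᵥ (μ • ycoord hA x) := by rw [h3]; rfl
    _ = μ • (Umat hA *ᵥ ycoord hA x) := by rw [Matrix.mulVec_smul]
    _ = μ • x := by rw [x_recover]

lemma col_eigen (j : V) :
    A *ᵥ (fun i => Umat hA i j) = hA.eigenvalues j • (fun i => Umat hA i j) := by
  have h := hA.mulVec_eigenvectorBasis j
  convert h using 2 <;> rfl

lemma ycoord_eq_dot (x : V → ℝ) (j : V) : ycoord hA x j = (fun i => Umat hA i j) ⬝ᵥ x := by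
  simp [ycoord, Matrix.mulVec, dotProduct, Matrix.star_apply]

lemma col_ne_zero (j : V) : (fun i => Umat hA i j) ≠ 0 := by
  intro h0
  have := hA.eigenvectorBasis.orthonormal.ne_zero j
  apply this
  ext i
  exact congrFun h0 i

lemma poly_zero {θa θb θc : ℝ}
    (hvals : ∀ i, hA.eigenvalues i = θa ∨ hA.eigenvalues i = θb ∨ hA.eigenvalues i = θc) :
    (A - θa • 1) * ((A - θb • 1) * (A - θc • 1)) = 0 := by
  have e1 : ∀ (θ c : ℝ) (v : V → ℝ), (A *ᵥ v = c • v) → (A - θ • 1) *ᵥ v = (c - θ) • v := by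
    intro θ c v hv
    rw [Matrix.sub_mulVec, hv, Matrix.smul_mulVec, Matrix.one_mulVec, sub_smul]
  have hcol : ∀ j, ((A - θa • 1) * ((A - θb • 1) * (A - θc • 1))) *ᵥ (fun i => Umat hA i j) = 0 := by
    intro j
    set lam := hA.eigenvalues j with hlam
    set colj := (fun i => Umat hA i j) with hcolj
    have h1 : (A - θc • 1) *ᵥ colj = (lam - θc) • colj := e1 _ _ _ (col_eigen hA j)
    have h2 : (A - θb • 1) *ᵥ ((lam - θc) • colj) = (lam - θc) • ((lam - θb) • colj) := by
      rw [Matrix.mulVec_smul, e1 _ _ _ (col_eigen hA j)]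
    have h3 : (A - θa • 1) *ᵥ ((lam - θc) • ((lam - θb) • colj))
        = (lam - θc) • ((lam - θb) • ((lam - θa) • colj)) := by
      rw [Matrix.mulVec_smul, Matrix.mulVec_smul, e1 _ _ _ (col_eigen hA j)]
    rw [← Matrix.mulVec_mulVec, ← Matrix.mulVec_mulVec, h1, h2, h3]
    rw [smul_smul, smul_smul]
    have : (lam - θc) * (lam - θb) * (lam - θa) = 0 := by
      rcases hvals j with h | h | h <;> rw [← hlam] at * <;> rw [h] <;> ring
    rw [this, zero_smul]
  have hNU : ((A - θa • 1) * ((A - θb • 1) * (A - θc • 1))) * Umat hA = 0 := by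
    ext i j
    have := congrFun (hcol j) i
    simpa [Matrix.mulVec, dotProduct, Matrix.mul_apply] using this
  calc (A - θa • 1) * ((A - θb • 1) * (A - θc • 1))
      = (((A - θa • 1) * ((A - θb • 1) * (A - θc • 1))) * Umat hA) * star (Umat hA) := by
        rw [mul_assoc, UUstar, mul_one]
    _ = 0 := by rw [hNU, zero_mul]

end Herm

section Graph

variable (G : SimpleGraph V) [DecidableRel G.Adj]

lemma hermG : (G.adjMatrix ℝ).IsHermitian := by
  rw [Matrix.IsHermitian, conjTranspose_eq_transpose_of_trivial]; exact G.transpose_adjMatrix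

lemma qss (a b : V) (c d : ℝ) :
    (Pi.single a c) ⬝ᵥ (G.adjMatrix ℝ) *ᵥ (Pi.single b d) = (if G.Adj a b then c * d else 0) := by
  rw [Matrix.mulVec_single, single_dotProduct]
  simp only [Pi.smul_apply, Matrix.col_apply, MulOpposite.smul_eq_mul_unop, MulOpposite.unop_op, adjMatrix_apply]
  split_ifs <;> ring

variable {G}

/-- the absolute value of an eigenvector for the top eigenvalue is an eigenvector -/
lemma abs_eig {θ0 : ℝ} (hub : ∀ i, (hermG G).eigenvalues i ≤ θ0) {f : V → ℝ}
    (heig : (G.adjMatrix ℝ) *ᵥ f = θ0 • f) :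
    (G.adjMatrix ℝ) *ᵥ (fun v => |f v|) = θ0 • (fun v => |f v|) := by
  apply eigen_of_rayleigh (hermG G) hub
  have h1 : (fun v => |f v|) ⬝ᵥ (fun v => |f v|) = f ⬝ᵥ f := by
    simp [dotProduct, abs_mul_abs_self]
  have h2 : f ⬝ᵥ (G.adjMatrix ℝ) *ᵥ f = θ0 * (f ⬝ᵥ f) := by
    rw [heig, dotProduct_smul, smul_eq_mul]
  have h3 : f ⬝ᵥ (G.adjMatrix ℝ) *ᵥ f ≤ (fun v => |f v|) ⬝ᵥ (G.adjMatrix ℝ) *ᵥ (fun v => |f v|) := by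
    simp only [dotProduct, Matrix.mulVec, Finset.mul_sum]
    apply Finset.sum_le_sum
    intro v _
    apply Finset.sum_le_sum
    intro u _
    simp only [adjMatrix_apply]
    by_cases h : G.Adj v u
    · simp only [if_pos h, one_mul]
      calc f v * f u ≤ |f v * f u| := le_abs_self _
        _ = |f v| * |f u| := abs_mul _ _
    · simp [if_neg h]
  rw [h1]
  linarith

/-- eigenvector of the top eigenvalue of a connected graph has no zero coordinate -/
lemma eigvec_pos {θ0 : ℝ} (hθ0 : 0 < θ0) (hub : ∀ i, (hermG G).eigenvalues i ≤ θ0)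
    (hconn : G.Connected) {f : V → ℝ} (hf : f ≠ 0)
    (heig : (G.adjMatrix ℝ) *ᵥ f = θ0 • f) : ∀ v, f v ≠ 0 := by
  set g : V → ℝ := fun v => |f v| with hg
  have hgeig : (G.adjMatrix ℝ) *ᵥ g = θ0 • g := abs_eig hub heig
  have hstep : ∀ a b : V, G.Adj a b → g a = 0 → g b = 0 := by
    intro a b hab ha
    have h1 : ((G.adjMatrix ℝ) *ᵥ g) a = θ0 * g a := by rw [hgeig]; simp
    rw [SimpleGraph.adjMatrix_mulVec_apply] at h1
    rw [ha, mul_zero] at h1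
    have h2 := (Finset.sum_eq_zero_iff_of_nonneg (fun u _ => abs_nonneg (f u))).mp h1
    exact h2 b (by rwa [SimpleGraph.mem_neighborFinset])
  have hwalk : ∀ (a b : V) (p : G.Walk a b), g a = 0 → g b = 0 := by
    intro a b p
    induction p with
    | nil => exact id
    | cons h q ih => intro ha; exact ih (hstep _ _ h ha)
  intro v hv
  obtain ⟨v₀, hv₀⟩ := Function.ne_iff.mp hf
  obtain ⟨p⟩ := hconn.preconnected v v₀
  have : g v₀ = 0 := hwalk v v₀ p (by simp [hg, hv])
  rw [hg] at this
  exact hv₀ (abs_eq_zero.mp this)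

lemma eig_unique {θ0 : ℝ} (hθ0 : 0 < θ0) (hub : ∀ i, (hermG G).eigenvalues i ≤ θ0)
    (hconn : G.Connected) {g : V → ℝ} (hgeig : (G.adjMatrix ℝ) *ᵥ g = θ0 • g)
    (hgpos : ∀ v, 0 < g v) (v₀ : V) :
    ∀ h : V → ℝ, (G.adjMatrix ℝ) *ᵥ h = θ0 • h → ∃ t : ℝ, h = t • g := by
  intro h hh
  refine ⟨h v₀ / g v₀, ?_⟩
  by_contra hne
  have hsub : (G.adjMatrix ℝ) *ᵥ (h - (h v₀ / g v₀) • g) = θ0 • (h - (h v₀ / g v₀) • g) := by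
    rw [Matrix.mulVec_sub, Matrix.mulVec_smul, hh, hgeig]
    funext v
    simp
    ring
  have hne' : h - (h v₀ / g v₀) • g ≠ 0 := by
    intro h0
    exact hne (by rw [← sub_eq_zero]; exact h0)
  have := eigvec_pos hθ0 hub hconn hne' hsub v₀
  apply this
  have : g v₀ ≠ 0 := ne_of_gt (hgpos v₀)
  rw [Pi.sub_apply, Pi.smul_apply, smul_eq_mul, div_mul_cancel₀ _ this, sub_self]


lemma config_contra {G : SimpleGraph V} [DecidableRel G.Adj] {g : V → ℝ}
    (hqneg : ∀ z : V → ℝ, g ⬝ᵥ z = 0 → z ⬝ᵥ (G.adjMatrix ℝ) *ᵥ z ≤ 0)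
    (hgpos : ∀ v, 0 < g v) {p1 p2 p3 p4 : V}
    (h12 : G.Adj p1 p2) (h23 : G.Adj p2 p3) (h34 : G.Adj p3 p4)
    (n13 : ¬G.Adj p1 p3) (n14 : ¬G.Adj p1 p4) (κ : ℝ)
    (hcase : (G.Adj p2 p4 ∧ κ = 1/2) ∨ (¬G.Adj p2 p4 ∧ κ = 1)) : False := by
  have hκ : 0 < κ := by rcases hcase with ⟨_, h⟩ | ⟨_, h⟩ <;> rw [h] <;> norm_num
  set s : ℝ := g p1 + κ * g p2 with hs
  set t : ℝ := -(g p3 + g p4) with ht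
  have hspos : 0 < s := by
    have := hgpos p1; have := hgpos p2; positivity
  set z : V → ℝ := t • (Pi.single p1 1 : V → ℝ) + (κ*t) • (Pi.single p2 1 : V → ℝ)
      + s • (Pi.single p3 1 : V → ℝ) + s • (Pi.single p4 1 : V → ℝ) with hz
  have hdot : g ⬝ᵥ z = 0 := by
    rw [hz]
    simp only [dotProduct_add, dotProduct_smul, dotProduct_single, smul_eq_mul, mul_one]
    rw [hs, ht]; ring
  have hqz := hqneg z hdot
  have s21 := h12.symm; have s32 := h23.symm; have s43 := h34.symm
  have n31 : ¬ G.Adj p3 p1 := fun hh => n13 hh.symm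
  have n41 : ¬ G.Adj p4 p1 := fun hh => n14 hh.symm
  rcases hcase with ⟨h24, hκv⟩ | ⟨h24, hκv⟩
  · have s42 := h24.symm
    have hexp : z ⬝ᵥ (G.adjMatrix ℝ) *ᵥ z = 2*s^2 + 2*s*t + t^2 := by
      rw [hz]
      simp only [Matrix.mulVec_add, Matrix.mulVec_smul, dotProduct_add, add_dotProduct,
        smul_dotProduct, dotProduct_smul, qss, smul_eq_mul, mul_one]
      simp only [h12, s21, h23, s32, h34, s43, h24, s42, n13, n31, n14, n41,
        SimpleGraph.irrefl, if_true, if_false, ite_true, ite_false]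
      rw [hκv]; ring
    rw [hexp] at hqz
    nlinarith [sq_nonneg (s+t), sq_nonneg s, hspos]
  · have n42 : ¬ G.Adj p4 p2 := fun hh => h24 hh.symm
    have hexp : z ⬝ᵥ (G.adjMatrix ℝ) *ᵥ z = 2*s^2 + 2*s*t + 2*t^2 := by
      rw [hz]
      simp only [Matrix.mulVec_add, Matrix.mulVec_smul, dotProduct_add, add_dotProduct,
        smul_dotProduct, dotProduct_smul, qss, smul_eq_mul, mul_one]
      simp only [h12, s21, h23, s32, h34, s43, h24, n42, n13, n31, n14, n41,
        SimpleGraph.irrefl, if_true, if_false, ite_true, ite_false]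
      rw [hκv]; ring
    rw [hexp] at hqz
    nlinarith [sq_nonneg (s+t), sq_nonneg s, sq_nonneg t, hspos]


lemma claimA {G : SimpleGraph V} [DecidableRel G.Adj] (hconn : G.Connected) {g : V → ℝ}
    (hqneg : ∀ z : V → ℝ, g ⬝ᵥ z = 0 → z ⬝ᵥ (G.adjMatrix ℝ) *ᵥ z ≤ 0)
    (hgpos : ∀ v, 0 < g v) :
    ∀ ⦃u w v : V⦄, G.Adj u w → ¬G.Adj v u → ¬G.Adj v w → v ≠ u → v ≠ w → False := by
  have H : ∀ (a b : V) (p : G.Walk a b), ∀ w, G.Adj b w → ¬G.Adj a b → ¬G.Adj a w →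
      a ≠ b → a ≠ w → False := by
    intro a b p
    induction p with
    | nil => intro w hww h1 h2 h3 h4; exact h2 hww
    | cons hadj q ih =>
      rename_i av rv bv
      intro w hww h1 h2 h3 h4
      by_cases hrb : rv = bv
      · subst hrb; exact h1 hadj
      by_cases hrw : rv = w
      · subst hrw; exact h2 hadj
      by_cases hAb : G.Adj rv bv
      · by_cases hAw : G.Adj rv w
        · exact config_contra hqneg hgpos hadj hAb hww h1 h2 (1/2) (Or.inl ⟨hAw, rfl⟩)
        · exact config_contra hqneg hgpos hadj hAb hww h1 h2 1 (Or.inr ⟨hAw, rfl⟩)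
      · by_cases hAw : G.Adj rv w
        · exact config_contra hqneg hgpos hadj hAw hww.symm h2 h1 1 (Or.inr ⟨hAb, rfl⟩)
        · exact ih w hww hAb hAw hrb hrw
  intro u w v huw h1 h2 h3 h4
  obtain ⟨p⟩ := hconn.preconnected v u
  exact H v u p w huw h1 h2 h3 h4

lemma twin_deg {G : SimpleGraph V} [DecidableRel G.Adj]
    (hno : ∀ ⦃u w v : V⦄, G.Adj u w → ¬G.Adj v u → ¬G.Adj v w → v ≠ u → v ≠ w → False)
    {u v : V} (hneq : u ≠ v) (hnadj : ¬G.Adj u v) : G.degree u = G.degree v := by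
  have key : ∀ a b : V, a ≠ b → ¬G.Adj a b → ∀ k, G.Adj a k → G.Adj b k := by
    intro a b hab hnab k hak
    by_contra hbk
    have hbk' : ¬G.Adj b a := fun hh => hnab hh.symm
    have hbne : b ≠ k := by rintro rfl; exact hnab hak
    exact hno hak hbk' hbk hab.symm hbne
  have : G.neighborFinset u = G.neighborFinset v := by
    ext k
    simp only [SimpleGraph.mem_neighborFinset]
    exact ⟨key u v hneq hnadj k, key v u hneq.symm (fun hh => hnadj hh.symm) k⟩
  unfold SimpleGraph.degree
  rw [this]

lemma common_count {G : SimpleGraph V} [DecidableRel G.Adj]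
    (hno : ∀ ⦃u w v : V⦄, G.Adj u w → ¬G.Adj v u → ¬G.Adj v w → v ≠ u → v ≠ w → False)
    {x y : V} (hxy : G.Adj x y) :
    ((G.adjMatrix ℝ * G.adjMatrix ℝ) x y)
      = (G.degree x : ℝ) + (G.degree y : ℝ) - (Fintype.card V : ℝ) := by
  classical
  set Px := Finset.univ.filter (fun k => ¬ G.Adj x k) with hPx
  set Py := Finset.univ.filter (fun k => ¬ G.Adj y k) with hPy
  have hPdisj : Disjoint Px Py := by
    rw [Finset.disjoint_left]
    intro k hkx hky
    rw [hPx, Finset.mem_filter] at hkx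
    rw [hPy, Finset.mem_filter] at hky
    have hnxk := hkx.2
    have hnyk := hky.2
    by_cases hk : k = x
    · subst hk; exact hnyk hxy.symm
    by_cases hk2 : k = y
    · subst hk2; exact hnxk hxy
    exact hno hxy (fun hh => hnxk hh.symm) (fun hh => hnyk hh.symm) hk hk2
  have hdx : G.degree x + Px.card = Fintype.card V := by
    rw [hPx]
    rw [← SimpleGraph.card_neighborFinset_eq_degree]
    rw [SimpleGraph.neighborFinset_eq_filter]
    rw [Finset.card_filter_add_card_filter_not, Finset.card_univ]
  have hdy : G.degree y + Py.card = Fintype.card V := by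
    rw [hPy, ← SimpleGraph.card_neighborFinset_eq_degree, SimpleGraph.neighborFinset_eq_filter,
      Finset.card_filter_add_card_filter_not, Finset.card_univ]
  have hAA : (G.adjMatrix ℝ * G.adjMatrix ℝ) x y
      = ((Finset.univ.filter (fun k => G.Adj x k ∧ G.Adj y k)).card : ℝ) := by
    rw [Matrix.mul_apply]
    rw [show ∑ k, (G.adjMatrix ℝ) x k * (G.adjMatrix ℝ) k y
        = ∑ k, (if G.Adj x k ∧ G.Adj y k then (1:ℝ) else 0) by
      apply Finset.sum_congr rfl
      intro k _
      by_cases h1 : G.Adj x k <;> by_cases h2 : G.Adj y k <;>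
        simp [h1, h2, SimpleGraph.adjMatrix_apply, G.adj_comm k y]]
    rw [Finset.sum_boole]
  have hScompl : Finset.univ.filter (fun k => G.Adj x k ∧ G.Adj y k) = (Px ∪ Py)ᶜ := by
    ext k
    rw [hPx, hPy]
    simp only [Finset.mem_filter, Finset.mem_univ, true_and, Finset.mem_compl,
      Finset.mem_union, not_or, not_not]
  have hcunion : (Px ∪ Py).card = Px.card + Py.card := Finset.card_union_of_disjoint hPdisj
  have hcards : (Finset.univ.filter (fun k => G.Adj x k ∧ G.Adj y k)).card
      + (Px.card + Py.card) = Fintype.card V := by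
    rw [hScompl, ← hcunion, add_comm]
    exact Finset.card_add_card_compl _
  rw [hAA]
  have h1 : (Px.card : ℝ) = (Fintype.card V : ℝ) - G.degree x := by
    have := hdx; push_cast [← this]; ring
  have h2 : (Py.card : ℝ) = (Fintype.card V : ℝ) - G.degree y := by
    have := hdy; push_cast [← this]; ring
  have h3 : ((Finset.univ.filter (fun k => G.Adj x k ∧ G.Adj y k)).card : ℝ)
      + (Px.card + Py.card : ℕ) = (Fintype.card V : ℝ) := by
    exact_mod_cast congrArg (fun n : ℕ => (n : ℝ)) hcards
  push_cast at h3
  linarith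

end Graph

end Stm14

/-- `θ` is an eigenvalue of the (real) adjacency matrix of `G`. -/
def adjEig {V : Type} [Fintype V] [DecidableEq V] (G : SimpleGraph V) [DecidableRel G.Adj]
    (θ : ℝ) : Prop :=
  ∃ f : V → ℝ, f ≠ 0 ∧ (SimpleGraph.adjMatrix ℝ G).mulVec f = θ • f

/-- `Γ ∈ 𝒢₃(θ0,θ1,θ2)`: `Γ` is connected and the set of eigenvalues of its adjacency
matrix is exactly `{θ0, θ1, θ2}`, where `θ0 > θ1 > θ2`. -/
def InG3 {V : Type} [Fintype V] [DecidableEq V] (G : SimpleGraph V) [DecidableRel G.Adj]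
    (θ0 θ1 θ2 : ℝ) : Prop :=
  G.Connected ∧ θ1 < θ0 ∧ θ2 < θ1 ∧ {θ : ℝ | adjEig G θ} = {θ0, θ1, θ2}

/-- No triregular graph in `𝒢₃` admits a partition `V1, V2, V3` into nonempty parts with
`|V1| ≥ 2` such that `Γ[V1]` is complete or edgeless and the bipartite graphs between `V1`
and `V2`, and between `V1` and `V3`, are each complete or empty. -/
theorem stmt14 {V : Type} [Fintype V] [DecidableEq V] (G : SimpleGraph V) [DecidableRel G.Adj]
    (θ0 θ1 θ2 : ℝ) (h : InG3 G θ0 θ1 θ2)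
    (d1 d2 d3 : ℕ) (hd12 : d1 ≠ d2) (hd13 : d1 ≠ d3) (hd23 : d2 ≠ d3)
    (hdeg : ∀ x : V, G.degree x = d1 ∨ G.degree x = d2 ∨ G.degree x = d3)
    (he1 : ∃ x : V, G.degree x = d1) (he2 : ∃ x : V, G.degree x = d2)
    (he3 : ∃ x : V, G.degree x = d3)
    (V1 V2 V3 : Finset V) (hV1 : V1.Nonempty) (hV2 : V2.Nonempty) (hV3 : V3.Nonempty)
    (h12 : Disjoint V1 V2) (h13 : Disjoint V1 V3) (h23 : Disjoint V2 V3)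
    (hcover : V1 ∪ V2 ∪ V3 = Finset.univ)
    (hV1card : 2 ≤ V1.card)
    (hV1ind : (∀ x ∈ V1, ∀ y ∈ V1, x ≠ y → G.Adj x y) ∨ (∀ x ∈ V1, ∀ y ∈ V1, ¬ G.Adj x y))
    (hV12 : (∀ x ∈ V1, ∀ y ∈ V2, G.Adj x y) ∨ (∀ x ∈ V1, ∀ y ∈ V2, ¬ G.Adj x y))
    (hV13 : (∀ x ∈ V1, ∀ y ∈ V3, G.Adj x y) ∨ (∀ x ∈ V1, ∀ y ∈ V3, ¬ G.Adj x y)) :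
    False := by
  classical
  obtain ⟨hconn, hgt01, hgt12, hset⟩ := h
  have hmem : ∀ θ : ℝ, adjEig G θ ↔ (θ = θ0 ∨ θ = θ1 ∨ θ = θ2) := by
    intro θ
    have := Set.ext_iff.mp hset θ
    simpa [Set.mem_insert_iff, Set.mem_singleton_iff] using this
  have hG := Stm14.hermG G
  have hvals : ∀ i, hG.eigenvalues i = θ0 ∨ hG.eigenvalues i = θ1 ∨ hG.eigenvalues i = θ2 := by
    intro i
    exact (hmem _).mp ⟨_, Stm14.col_ne_zero hG i, Stm14.col_eigen hG i⟩
  have hub : ∀ i, hG.eigenvalues i ≤ θ0 := by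
    intro i; rcases hvals i with h' | h' | h' <;> rw [h'] <;> linarith
  obtain ⟨x, hx, y, hy, hxy⟩ := Finset.one_lt_card.mp hV1card
  obtain ⟨p0⟩ := hconn.preconnected x y
  have hedge : ∃ a b : V, G.Adj a b := by
    cases p0 with
    | nil => exact absurd rfl hxy
    | cons h' _ => exact ⟨_, _, h'⟩
  obtain ⟨a, b, hab⟩ := hedge
  have hθ0pos : 0 < θ0 := by
    by_contra hle
    push_neg at hle
    have hub0 : ∀ i, hG.eigenvalues i ≤ 0 := fun i => le_trans (hub i) hle
    have hq := Stm14.quad_le hG hub0 ((Pi.single a 1 : V → ℝ) + Pi.single b 1)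
    rw [zero_mul] at hq
    have hcomp : ((Pi.single a 1 : V → ℝ) + Pi.single b 1) ⬝ᵥ (G.adjMatrix ℝ) *ᵥ
        ((Pi.single a 1 : V → ℝ) + Pi.single b 1) = 2 := by
      simp only [Matrix.mulVec_add, dotProduct_add, add_dotProduct, Stm14.qss, mul_one]
      simp [hab, hab.symm]
      norm_num
    rw [hcomp] at hq; linarith
  -- applying the structure hypotheses: x and y are "twins"
  have hAvxy : ∀ v : V, v ≠ x → v ≠ y → ((G.adjMatrix ℝ) v x = (G.adjMatrix ℝ) v y) := by
    intro v hvx hvy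
    have hv : v ∈ V1 ∪ V2 ∪ V3 := by rw [hcover]; exact Finset.mem_univ v
    simp only [SimpleGraph.adjMatrix_apply]
    rcases Finset.mem_union.mp hv with hv' | hv3
    · rcases Finset.mem_union.mp hv' with hv1 | hv2
      · rcases hV1ind with hcomp | hemp
        · rw [if_pos (hcomp v hv1 x hx hvx), if_pos (hcomp v hv1 y hy hvy)]
        · rw [if_neg (hemp v hv1 x hx), if_neg (hemp v hv1 y hy)]
      · rcases hV12 with hall | hnone
        · rw [if_pos (hall x hx v hv2).symm, if_pos (hall y hy v hv2).symm]
        · rw [if_neg (fun hh => hnone x hx v hv2 hh.symm),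
            if_neg (fun hh => hnone y hy v hv2 hh.symm)]
    · rcases hV13 with hall | hnone
      · rw [if_pos (hall x hx v hv3).symm, if_pos (hall y hy v hv3).symm]
      · rw [if_neg (fun hh => hnone x hx v hv3 hh.symm),
          if_neg (fun hh => hnone y hy v hv3 hh.symm)]
  have hvecne : ((Pi.single x 1 : V → ℝ) - Pi.single y 1) ≠ 0 := by
    intro h0
    have := congrFun h0 x
    simp [Pi.single_apply, hxy] at this
  have hmv : ∀ v, ((G.adjMatrix ℝ) *ᵥ ((Pi.single x 1 : V → ℝ) - Pi.single y 1)) v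
      = (G.adjMatrix ℝ) v x - (G.adjMatrix ℝ) v y := by
    intro v
    rw [Matrix.mulVec_sub]
    simp [Matrix.mulVec_single]
  obtain ⟨c, hc01, hceig⟩ : ∃ c : ℝ, (c = 0 ∨ c = -1) ∧
      (G.adjMatrix ℝ) *ᵥ ((Pi.single x 1 : V → ℝ) - Pi.single y 1)
        = c • ((Pi.single x 1 : V → ℝ) - Pi.single y 1) := by
    have hsxx : (Pi.single x 1 : V → ℝ) x = 1 := by simp
    have hsyy : (Pi.single y 1 : V → ℝ) y = 1 := by simp
    have hsyx : (Pi.single y 1 : V → ℝ) x = 0 := by simp [Pi.single_apply, hxy]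
    have hsxy : (Pi.single x 1 : V → ℝ) y = 0 := by simp [Pi.single_apply, Ne.symm hxy]
    rcases hV1ind with hcomp | hemp
    · refine ⟨-1, Or.inr rfl, ?_⟩
      have hxyadj : G.Adj x y := hcomp x hx y hy hxy
      funext v
      rw [Pi.smul_apply, Pi.sub_apply, hmv v]
      by_cases hvx : v = x
      · rw [hvx, hsxx, hsyx]
        have e1 : (G.adjMatrix ℝ) x x = 0 := by simp
        have e2 : (G.adjMatrix ℝ) x y = 1 := by simp [hxyadj]
        rw [e1, e2]; norm_num
      · by_cases hvy : v = y
        · rw [hvy, hsxy, hsyy]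
          have e1 : (G.adjMatrix ℝ) y x = 1 := by simp [hxyadj.symm]
          have e2 : (G.adjMatrix ℝ) y y = 0 := by simp
          rw [e1, e2]; norm_num
        · rw [hAvxy v hvx hvy, Pi.single_eq_of_ne hvx, Pi.single_eq_of_ne hvy]
          norm_num
    · refine ⟨0, Or.inl rfl, ?_⟩
      have hxynadj : ¬ G.Adj x y := hemp x hx y hy
      funext v
      rw [Pi.smul_apply, Pi.sub_apply, hmv v]
      by_cases hvx : v = x
      · rw [hvx, hsxx, hsyx]
        have e1 : (G.adjMatrix ℝ) x x = 0 := by simp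
        have e2 : (G.adjMatrix ℝ) x y = 0 := by simp [hxynadj]
        rw [e1, e2]; norm_num
      · by_cases hvy : v = y
        · rw [hvy, hsxy, hsyy]
          have e1 : (G.adjMatrix ℝ) y x = 0 := by
            simp only [SimpleGraph.adjMatrix_apply]
            rw [if_neg (fun hh => hxynadj (SimpleGraph.Adj.symm hh))]
          have e2 : (G.adjMatrix ℝ) y y = 0 := by simp
          rw [e1, e2]; norm_num
        · rw [hAvxy v hvx hvy, Pi.single_eq_of_ne hvx, Pi.single_eq_of_ne hvy]
          norm_num
  have hcadj : adjEig G c := ⟨_, hvecne, hceig⟩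
  have hcmem := (hmem c).mp hcadj
  have hcle : c ≤ 0 := by rcases hc01 with h' | h' <;> rw [h'] <;> norm_num
  -- the second largest eigenvalue is ≤ 0
  have hθ1le : θ1 ≤ 0 := by
    rcases hcmem with h' | h' | h'
    · exfalso; rw [← h'] at hθ0pos; linarith
    · rw [← h']; exact hcle
    · exfalso
      rcases hc01 with hc' | hc'
      · -- θ2 = 0 : impossible since there is an edge
        have hθ2v : θ2 = 0 := by rw [← h', hc']
        have hlb : ∀ i, (0:ℝ) ≤ hG.eigenvalues i := by
          intro i; rcases hvals i with h'' | h'' | h'' <;> rw [h''] <;> linarith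
        have hq := Stm14.quad_ge hG hlb ((Pi.single a 1 : V → ℝ) - Pi.single b 1)
        rw [zero_mul] at hq
        have hcomp : ((Pi.single a 1 : V → ℝ) - Pi.single b 1) ⬝ᵥ (G.adjMatrix ℝ) *ᵥ
            ((Pi.single a 1 : V → ℝ) - Pi.single b 1) = -2 := by
          simp only [Matrix.mulVec_sub, dotProduct_sub, sub_dotProduct, Stm14.qss, mul_one]
          simp [hab, hab.symm]
          norm_num
        rw [hcomp] at hq; linarith
      · -- θ2 = -1 : G is complete, contradiction with three eigenvalues
        have hθ2v : θ2 = -1 := by rw [← h', hc']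
        have hlb : ∀ i, (-1:ℝ) ≤ hG.eigenvalues i := by
          intro i; rcases hvals i with h'' | h'' | h'' <;> rw [h''] <;> linarith
        have htrans : ∀ u v w : V, G.Adj u v → G.Adj v w → u ≠ w → G.Adj u w := by
          intro u v w huv hvw huw
          by_contra hnad
          have hq := Stm14.quad_ge hG hlb
            ((Pi.single u 1 : V → ℝ) - Pi.single v 1 + Pi.single w 1)
          have huv' : u ≠ v := G.ne_of_adj huv
          have hvw' : v ≠ w := G.ne_of_adj hvw
          have hcomp : ((Pi.single u 1 : V → ℝ) - Pi.single v 1 + Pi.single w 1) ⬝ᵥ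
              (G.adjMatrix ℝ) *ᵥ ((Pi.single u 1 : V → ℝ) - Pi.single v 1 + Pi.single w 1)
              = -4 := by
            have hnad' : ¬ G.Adj w u := fun hh => hnad hh.symm
            simp only [Matrix.mulVec_sub, Matrix.mulVec_add, dotProduct_sub, dotProduct_add,
              sub_dotProduct, add_dotProduct, Stm14.qss, mul_one]
            simp [huv, huv.symm, hvw, hvw.symm, hnad, hnad']
            norm_num
          have hzz : ((Pi.single u 1 : V → ℝ) - Pi.single v 1 + Pi.single w 1) ⬝ᵥ
              ((Pi.single u 1 : V → ℝ) - Pi.single v 1 + Pi.single w 1) = 3 := by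
            simp only [dotProduct_sub, dotProduct_add, sub_dotProduct, add_dotProduct,
              dotProduct_single, single_dotProduct, mul_one, one_mul]
            simp only [Pi.sub_apply, Pi.add_apply, Pi.single_apply]
            simp [huv', hvw', huw, huv'.symm, hvw'.symm, Ne.symm huw]
            norm_num
          rw [hcomp, hzz] at hq
          linarith
        have hwalkadj : ∀ (a' b' : V) (pw : G.Walk a' b'), a' ≠ b' → G.Adj a' b' := by
          intro a' b' pw
          induction pw with
          | nil => intro hne; exact absurd rfl hne
          | cons hadj q ih =>
            rename_i av rv bv
            intro hne
            by_cases hrb : rv = bv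
            · subst hrb; exact hadj
            · exact htrans _ _ _ hadj (ih hrb) hne
        have hcompl : ∀ u v : V, u ≠ v → G.Adj u v := by
          intro u v huv
          obtain ⟨pw⟩ := hconn.preconnected u v
          exact hwalkadj u v pw huv
        have hconst : ∀ (θ : ℝ) (f : V → ℝ), θ ≠ -1 → f ≠ 0 →
            (G.adjMatrix ℝ) *ᵥ f = θ • f → θ = (Fintype.card V : ℝ) - 1 := by
          intro θ f hθne hfne heigf
          have hne1 : θ + 1 ≠ 0 := fun h0 => hθne (by linarith)
          have hS : ∀ v, (θ + 1) * f v = ∑ u, f u := by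
            intro v
            have h1 : ((G.adjMatrix ℝ) *ᵥ f) v = θ * f v := by rw [heigf]; simp
            rw [SimpleGraph.adjMatrix_mulVec_apply] at h1
            have hnb : G.neighborFinset v = Finset.univ.erase v := by
              ext k
              simp only [SimpleGraph.mem_neighborFinset, Finset.mem_erase, Finset.mem_univ,
                and_true]
              constructor
              · intro hk; exact (G.ne_of_adj hk).symm
              · intro hk; exact hcompl v k (Ne.symm hk)
            rw [hnb, Finset.sum_erase_eq_sub (Finset.mem_univ v)] at h1
            linarith
          obtain ⟨v₀, hv₀⟩ := Function.ne_iff.mp hfne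
          have hfc : ∀ v w : V, f v = f w := by
            intro v w
            exact mul_left_cancel₀ hne1 ((hS v).trans (hS w).symm)
          have hsum : (∑ u, f u) = (Fintype.card V : ℝ) * f v₀ := by
            rw [Finset.sum_congr rfl (fun u _ => hfc u v₀), Finset.sum_const, Finset.card_univ,
              nsmul_eq_mul]
          have h2 := hS v₀
          rw [hsum] at h2
          have h3 : θ + 1 = (Fintype.card V : ℝ) := mul_right_cancel₀ hv₀ h2
          linarith
        obtain ⟨f1, hf1ne, hf1eig⟩ := (hmem θ1).mpr (Or.inr (Or.inl rfl))
        obtain ⟨f0', hf0ne', hf0eig'⟩ := (hmem θ0).mpr (Or.inl rfl)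
        have e1 := hconst θ1 f1
          (by intro h0; rw [h0] at hgt12; rw [hθ2v] at hgt12; linarith) hf1ne hf1eig
        have e0 := hconst θ0 f0'
          (by intro h0; rw [h0] at hθ0pos; linarith) hf0ne' hf0eig'
        linarith
  -- Perron eigenvector
  obtain ⟨f0, hf0ne, hf0eig⟩ := (hmem θ0).mpr (Or.inl rfl)
  set gP : V → ℝ := fun v => |f0 v| with hgPdef
  have hgeig : (G.adjMatrix ℝ) *ᵥ gP = θ0 • gP := Stm14.abs_eig hub hf0eig
  have hgpos : ∀ v, 0 < gP v := by
    intro v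
    have := Stm14.eigvec_pos hθ0pos hub hconn hf0ne hf0eig v
    exact abs_pos.mpr this
  have huniq := Stm14.eig_unique hθ0pos hub hconn hgeig hgpos x
  have hqneg : ∀ z : V → ℝ, gP ⬝ᵥ z = 0 → z ⬝ᵥ (G.adjMatrix ℝ) *ᵥ z ≤ 0 := by
    intro z hz
    rw [Stm14.quad_eq hG z]
    apply Finset.sum_nonpos
    intro i _
    rcases hvals i with h' | h' | h'
    · obtain ⟨t, htc⟩ := huniq _ (by rw [Stm14.col_eigen hG i, h'])
      rw [Stm14.ycoord_eq_dot hG z i, htc, smul_dotProduct, hz]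
      simp
    · rw [h']
      exact mul_nonpos_iff.mpr (Or.inr ⟨hθ1le, sq_nonneg _⟩)
    · rw [h']
      exact mul_nonpos_iff.mpr (Or.inr ⟨by linarith, sq_nonneg _⟩)
  have hno := Stm14.claimA hconn hqneg hgpos
  -- three vertices with pairwise distinct degrees
  obtain ⟨x1, hx1⟩ := he1
  obtain ⟨x2, hx2⟩ := he2
  obtain ⟨x3, hx3⟩ := he3
  have hne12 : x1 ≠ x2 := by rintro rfl; exact hd12 (hx1 ▸ hx2)
  have hne13 : x1 ≠ x3 := by rintro rfl; exact hd13 (hx1 ▸ hx3)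
  have hne23 : x2 ≠ x3 := by rintro rfl; exact hd23 (hx2 ▸ hx3)
  have hadj12 : G.Adj x1 x2 := by
    by_contra hn
    have := Stm14.twin_deg hno hne12 hn
    rw [hx1, hx2] at this
    exact hd12 this
  have hadj13 : G.Adj x1 x3 := by
    by_contra hn
    have := Stm14.twin_deg hno hne13 hn
    rw [hx1, hx3] at this
    exact hd13 this
  have hadj23 : G.Adj x2 x3 := by
    by_contra hn
    have := Stm14.twin_deg hno hne23 hn
    rw [hx2, hx3] at this
    exact hd23 this
  -- the matrix B = (A - θ1)(A - θ2) is a multiple of gP gPᵀ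
  set B : Matrix V V ℝ := ((G.adjMatrix ℝ) - θ1 • 1) * ((G.adjMatrix ℝ) - θ2 • 1) with hB
  have hpoly := Stm14.poly_zero hG hvals
  have hBeig : ∀ xv : V → ℝ, (G.adjMatrix ℝ) *ᵥ (B *ᵥ xv) = θ0 • (B *ᵥ xv) := by
    intro xv
    have h0 : (((G.adjMatrix ℝ) - θ0 • 1) * B) *ᵥ xv = 0 := by
      rw [hB, hpoly, Matrix.zero_mulVec]
    rw [← Matrix.mulVec_mulVec, Matrix.sub_mulVec, Matrix.smul_mulVec,
      Matrix.one_mulVec] at h0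
    exact sub_eq_zero.mp h0
  have hBcol : ∀ j : V, ∃ t : ℝ, (fun i => B i j) = t • gP := by
    intro j
    obtain ⟨t, ht⟩ := huniq (B *ᵥ (Pi.single j 1)) (hBeig _)
    refine ⟨t, ?_⟩
    rw [← ht]
    funext i
    simp [Matrix.mulVec_single]
  choose tB htB using hBcol
  have hBij : ∀ i j, B i j = tB j * gP i := by
    intro i j
    have := congrFun (htB j) i
    simpa using this
  have hBexp : B = (G.adjMatrix ℝ) * (G.adjMatrix ℝ) - (θ1 + θ2) • (G.adjMatrix ℝ)
      + (θ1*θ2) • (1 : Matrix V V ℝ) := by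
    rw [hB]
    simp only [Matrix.sub_mul, Matrix.mul_sub, Matrix.smul_mul, Matrix.mul_smul,
      Matrix.one_mul, Matrix.mul_one, smul_smul]
    module
  have hsymAA : ∀ i j : V, (G.adjMatrix ℝ * G.adjMatrix ℝ) i j
      = (G.adjMatrix ℝ * G.adjMatrix ℝ) j i := by
    have hsym2 : (G.adjMatrix ℝ * G.adjMatrix ℝ)ᵀ = G.adjMatrix ℝ * G.adjMatrix ℝ := by
      rw [Matrix.transpose_mul, SimpleGraph.transpose_adjMatrix]
    intro i j
    conv_lhs => rw [← hsym2]
    rw [Matrix.transpose_apply]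
  have hBentry : ∀ i j : V, B i j = (G.adjMatrix ℝ * G.adjMatrix ℝ) i j
      - (θ1 + θ2) * (G.adjMatrix ℝ) i j + (θ1*θ2) * (if i = j then 1 else 0) := by
    intro i j
    rw [hBexp]
    simp [Matrix.add_apply, Matrix.sub_apply, Matrix.smul_apply, Matrix.one_apply, smul_eq_mul]
  have hBsymm : ∀ i j : V, B i j = B j i := by
    intro i j
    rw [hBentry i j, hBentry j i, hsymAA i j]
    have h1 : (G.adjMatrix ℝ) i j = (G.adjMatrix ℝ) j i := by
      simp [SimpleGraph.adjMatrix_apply, G.adj_comm i j]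
    have h2 : (if i = j then (1:ℝ) else 0) = (if j = i then (1:ℝ) else 0) := by
      simp [eq_comm]
    rw [h1, h2]
  have hμall : ∀ i j : V, B i j = (tB x / gP x) * gP i * gP j := by
    intro i j
    have h1 : tB j * gP x = tB x * gP j := by
      have ha := hBij x j
      have hb := hBij j x
      rw [hBsymm x j] at ha
      rw [ha] at hb
      linarith [hb]
    rw [hBij i j]
    have hgx : gP x ≠ 0 := ne_of_gt (hgpos x)
    rw [div_mul_eq_mul_div, div_mul_eq_mul_div, eq_div_iff hgx]
    linear_combination gP i * h1
  set μ : ℝ := tB x / gP x with hμdef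
  have hdiagB : ∀ v : V, μ * gP v * gP v = (G.degree v : ℝ) + θ1*θ2 := by
    intro v
    have h1 := hμall v v
    rw [hBentry v v] at h1
    rw [SimpleGraph.adjMatrix_mul_self_apply_self] at h1
    simp only [SimpleGraph.adjMatrix_apply, if_neg (G.irrefl (v := v)), eq_self_iff_true, if_true] at h1
    linarith [h1]
  have hoffB : ∀ u v : V, G.Adj u v → μ * gP u * gP v
      = (G.degree u : ℝ) + (G.degree v : ℝ) - (Fintype.card V : ℝ) - (θ1 + θ2) := by
    intro u v huv
    have h1 := hμall u v
    rw [hBentry u v] at h1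
    rw [Stm14.common_count hno huv] at h1
    rw [if_neg (G.ne_of_adj huv)] at h1
    rw [SimpleGraph.adjMatrix_apply, if_pos huv] at h1
    linarith [h1]
  have D1 := hdiagB x1; rw [hx1] at D1
  have D2 := hdiagB x2; rw [hx2] at D2
  have D3 := hdiagB x3; rw [hx3] at D3
  have E12 := hoffB x1 x2 hadj12; rw [hx1, hx2] at E12
  have E13 := hoffB x1 x3 hadj13; rw [hx1, hx3] at E13
  have E23 := hoffB x2 x3 hadj23; rw [hx2, hx3] at E23
  have hd12' : (d1:ℝ) ≠ d2 := fun h' => hd12 (Nat.cast_injective h')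
  have hd13' : (d1:ℝ) ≠ d3 := fun h' => hd13 (Nat.cast_injective h')
  have hd23' : (d2:ℝ) ≠ d3 := fun h' => hd23 (Nat.cast_injective h')
  have k1 : μ * ((gP x2 - gP x3) * (gP x1 - gP x2 - gP x3)) = 0 := by
    linear_combination E12 - E13 - D2 + D3
  have k2 : μ * ((gP x1 - gP x3) * (gP x2 - gP x1 - gP x3)) = 0 := by
    linear_combination E12 - E23 - D1 + D3
  have hμne : μ ≠ 0 := by
    intro h0
    rw [h0] at D1 D2
    apply hd12'
    linarith
  have hg23 : gP x2 - gP x3 ≠ 0 := by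
    intro h0
    apply hd23'
    have : gP x2 = gP x3 := by linarith
    rw [this] at D2
    linarith
  have hg13 : gP x1 - gP x3 ≠ 0 := by
    intro h0
    apply hd13'
    have : gP x1 = gP x3 := by linarith
    rw [this] at D1
    linarith
  have r1 : gP x1 - gP x2 - gP x3 = 0 := by
    rcases mul_eq_zero.mp k1 with h0 | h0
    · exact absurd h0 hμne
    · rcases mul_eq_zero.mp h0 with h0' | h0'
      · exact absurd h0' hg23
      · exact h0'
  have r2 : gP x2 - gP x1 - gP x3 = 0 := by
    rcases mul_eq_zero.mp k2 with h0 | h0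
    · exact absurd h0 hμne
    · rcases mul_eq_zero.mp h0 with h0' | h0'
      · exact absurd h0' hg13
      · exact h0'
  have := hgpos x3
  linarith
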